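/- arXiv:1502.07073 — 5 statements merged into one kernel-verified Lean document; each statement's English description precedes it below -/
import Mathlib

section
/- Let I = [q,s] be an interval in the geometric interval family 𝓘, and let I' = [q', q−1] be an interval (of positive natural numbers) whose right endpoint is q−1 and whose size satisfies |I'| = 2^j · |I| for some integer j ≤ 0. Then I' ∈ 𝓘. -/
/-- The geometric interval family `𝓘`: the interval `[q,s]` belongs to `𝓘` iff
`q = i·2^k` and `s = (i+1)·2^k − 1` for some `k ≥ 0` and `i ≥ 1`. -/
def IsGeo (q s : ℕ) : Prop :=
  ∃ k i : ℕ, 1 ≤ i ∧ q = i * 2 ^ k ∧ s = (i + 1) * 2 ^ k - 1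

/-- Let `[q,s] ∈ 𝓘` and let `[q', q−1]` be an interval of positive naturals whose
right endpoint is `q − 1` and whose size satisfies `|[q,s]| = 2^m · |[q', q−1]|` for
some `m ≥ 0` (i.e. `|[q', q−1]| = 2^j·|[q,s]|` with `j = −m ≤ 0`). Then `[q', q−1] ∈ 𝓘`. -/
theorem left_interval_mem_geo (q s q' : ℕ) (h : IsGeo q s)
    (hq' : 1 ≤ q') (hle : q' ≤ q - 1)
    (hsize : ∃ m : ℕ, s - q + 1 = 2 ^ m * ((q - 1) - q' + 1)) :
    IsGeo q' (q - 1) := by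
  obtain ⟨k, i, hi, hq, hs⟩ := h
  obtain ⟨m, hm⟩ := hsize
  have hp : (1:ℕ) ≤ 2 ^ k := Nat.one_le_two_pow
  have hmul : (i + 1) * 2 ^ k = i * 2 ^ k + 2 ^ k := by ring
  have hq1 : 1 ≤ q := by
    have : 1 * 1 ≤ i * 2 ^ k := Nat.mul_le_mul hi hp
    omega
  have hsk : s - q + 1 = 2 ^ k := by omega
  have hqq : (q - 1) - q' + 1 = q - q' := by omega
  rw [hqq] at hm
  have key : 2 ^ k = 2 ^ m * (q - q') := by omega
  have hdvd : 2 ^ m ∣ 2 ^ k := ⟨q - q', key⟩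
  have hmk : m ≤ k := (Nat.pow_dvd_pow_iff_le_right one_lt_two).mp hdvd
  have hab : 2 ^ k = 2 ^ m * 2 ^ (k - m) := by
    rw [← pow_add]; congr 1; omega
  have hb : q - q' = 2 ^ (k - m) := by
    have h2 : 0 < 2 ^ m := Nat.pow_pos (by norm_num)
    exact (Nat.eq_of_mul_eq_mul_left h2 (by omega)).symm
  set b := 2 ^ (k - m) with hbdef
  have hb1 : 1 ≤ b := Nat.one_le_two_pow
  have hq2 : q = i * 2 ^ m * b := by rw [hq, hab]; ring
  have hc1 : 1 ≤ i * 2 ^ m := Nat.mul_le_mul hi (Nat.one_le_two_pow)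
  have hq'eq : q' = q - b := by omega
  have hq'eq2 : q' = (i * 2 ^ m - 1) * b := by
    rw [Nat.sub_mul, one_mul, ← hq2, hq'eq]
  refine ⟨k - m, i * 2 ^ m - 1, ?_, hq'eq2, ?_⟩
  · rcases Nat.lt_or_ge (i * 2 ^ m - 1) 1 with hlt | hge
    · exfalso
      have : i * 2 ^ m - 1 = 0 := by omega
      rw [this, zero_mul] at hq'eq2; omega
    · exact hge
  · have h4 : i * 2 ^ m - 1 + 1 = i * 2 ^ m := by omega
    rw [h4, ← hq2]
end

section
/- Let I = [q,s] be an interval in the geometric interval family 𝓘, and let I' = [s+1, s'] be a consecutive interval (its left endpoint is s+1) whose size satisfies |I'| = 2^j · |I| for some integer j ≤ 0. Then I' ∈ 𝓘. -/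
/-- Let `[q,s] ∈ 𝓘` and let `[s+1, s']` be the consecutive interval whose size
satisfies `|[q,s]| = 2^m · |[s+1, s']|` for some `m ≥ 0` (i.e. `|[s+1,s']| = 2^j·|[q,s]|`
with `j = −m ≤ 0`). Then `[s+1, s'] ∈ 𝓘`. -/
theorem right_interval_mem_geo (q s s' : ℕ) (h : IsGeo q s) (hle : s + 1 ≤ s')
    (hsize : ∃ m : ℕ, s - q + 1 = 2 ^ m * (s' - (s + 1) + 1)) :
    IsGeo (s + 1) s' := by
  obtain ⟨k, i, hi, hq, hs⟩ := h
  obtain ⟨m, hm⟩ := hsize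
  have h2k : (1:ℕ) ≤ 2 ^ k := Nat.one_le_two_pow
  have hs1 : s + 1 = (i + 1) * 2 ^ k := by
    subst hs
    have : 1 ≤ (i + 1) * 2 ^ k := Nat.one_le_iff_ne_zero.mpr (by positivity)
    omega
  have hexp : (i + 1) * 2 ^ k = i * 2 ^ k + 2 ^ k := by ring
  have hsize' : s - q + 1 = 2 ^ k := by subst hq; omega
  have hd : 2 ^ k = 2 ^ m * (s' - s) := by
    have heq : s' - (s + 1) + 1 = s' - s := by omega
    rw [← hsize', hm, heq]
  have hmk : m ≤ k := by
    by_contra hc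
    push_neg at hc
    have h1 : 2 ^ k < 2 ^ m := Nat.pow_lt_pow_right (by norm_num) hc
    have h2 : 1 ≤ s' - s := by omega
    nlinarith
  have hss : s' - s = 2 ^ (k - m) := by
    have : 2 ^ m * 2 ^ (k - m) = 2 ^ m * (s' - s) := by
      rw [← pow_add]; rw [← hd]; congr 1; omega
    have hpos : 0 < 2 ^ m := Nat.pow_pos (by norm_num)
    exact (Nat.eq_of_mul_eq_mul_left hpos this).symm
  refine ⟨k - m, (i + 1) * 2 ^ m, ?_, ?_, ?_⟩
  · have : 1 ≤ 2 ^ m := Nat.one_le_two_pow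
    nlinarith
  · rw [hs1, mul_assoc, ← pow_add]
    congr 2
    omega
  · have hk : 2 ^ m * 2 ^ (k - m) = 2 ^ k := by rw [← pow_add]; congr 1; omega
    have hs' : s' = s + 2 ^ (k - m) := by omega
    have h1 : ((i + 1) * 2 ^ m + 1) * 2 ^ (k - m) = (i+1) * 2^k + 2 ^ (k-m) := by
      rw [add_mul, one_mul, mul_assoc, hk]
    omega
end

section
/- Every interval I = [q,s] of positive natural numbers (1 ≤ q ≤ s) can be partitioned into finitely many pairwise disjoint consecutive intervals I_{−k}, I_{−k+1}, …, I_{−1}, I_0, I_1, …, I_p (listed from left to right, with union equal to I), all belonging to the geometric interval family 𝓘, such that |I_{−i}| / |I_{−i+1}| ≤ 1/2 for every i with 1 ≤ i ≤ k, and |I_i| / |I_{i−1}| ≤ 1/2 for every i with 2 ≤ i ≤ p. -/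
lemma geo_block (q g : ℕ) (h1 : 1 ≤ q) (hd : 2 ^ g ∣ q) :
    IsGeo q (q + 2 ^ g - 1) := by
  have h2 : 2 ^ g ≤ q := Nat.le_of_dvd h1 hd
  have hpos : 0 < 2 ^ g := Nat.pow_pos (by norm_num)
  refine ⟨g, q / 2 ^ g, ?_, ?_, ?_⟩
  · exact (Nat.one_le_div_iff hpos).2 h2
  · exact (Nat.div_mul_cancel hd).symm
  · rw [add_mul, one_mul, Nat.div_mul_cancel hd]

lemma dvd_le_padicValNat {q m : ℕ} (hq : q ≠ 0) (h : 2 ^ m ∣ q) :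
    m ≤ padicValNat 2 q := by
  by_contra hlt
  push_neg at hlt
  exact pow_succ_padicValNat_not_dvd hq (dvd_trans (pow_dvd_pow 2 hlt) h)

lemma geo_main : ∀ len : ℕ, ∀ q, 1 ≤ q → 1 ≤ len →
    ∃ (n k0 : ℕ) (e : ℕ → ℕ × ℕ),
      0 < n ∧ k0 < n ∧
      (e 0).1 = q ∧ (e (n - 1)).2 = q + len - 1 ∧
      (∀ i, i + 1 < n → (e (i + 1)).1 = (e i).2 + 1) ∧
      (∀ i, i < n → IsGeo (e i).1 (e i).2) ∧
      (∀ i, i + 1 ≤ k0 →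
        2 * ((e i).2 - (e i).1 + 1) ≤ (e (i + 1)).2 - (e (i + 1)).1 + 1) ∧
      (∀ i, k0 + 1 < i → i < n →
        2 * ((e i).2 - (e i).1 + 1) ≤ (e (i - 1)).2 - (e (i - 1)).1 + 1) ∧
      ((e 0).2 - (e 0).1 + 1 = 2 ^ (min (padicValNat 2 q) (Nat.log 2 len))) ∧
      (Nat.log 2 len ≤ padicValNat 2 q →
        k0 = 0 ∧ ∀ i, 0 < i → i < n →
          2 * ((e i).2 - (e i).1 + 1) ≤ (e (i - 1)).2 - (e (i - 1)).1 + 1) := by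
  intro len
  induction len using Nat.strong_induction_on with
  | _ len ih =>
  intro q hq hlen
  set v := padicValNat 2 q with hv
  set L := Nat.log 2 len with hL
  set g := min v L with hgdef
  have hdvd : 2 ^ g ∣ q := dvd_trans (pow_dvd_pow 2 (min_le_left _ _)) pow_padicValNat_dvd
  have hgle : 2 ^ g ≤ len :=
    le_trans (Nat.pow_le_pow_right (by norm_num) (min_le_right _ _))
      (Nat.pow_log_le_self 2 (by omega))
  have h1g : 1 ≤ 2 ^ g := Nat.one_le_two_pow
  by_cases hrem : len = 2 ^ g
  · -- single block
    refine ⟨1, 0, fun _ => (q, q + 2 ^ g - 1), one_pos, one_pos, rfl, ?_, ?_, ?_, ?_, ?_, ?_, ?_⟩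
    · show q + 2 ^ g - 1 = q + len - 1; omega
    · intro i hi; omega
    · intro i _; exact geo_block q g hq hdvd
    · intro i hi; omega
    · intro i h1 h2; omega
    · show (q + 2 ^ g - 1) - q + 1 = 2 ^ g; omega
    · exact fun _ => ⟨rfl, fun i h1 h2 => by omega⟩
  · -- recursive case
    have hlt : 2 ^ g < len := lt_of_le_of_ne hgle (fun h => hrem h.symm)
    have hq' : 1 ≤ q + 2 ^ g := by omega
    have hlen' : 1 ≤ len - 2 ^ g := by omega
    obtain ⟨n', k0', e', hn', hk0n', hfst', hlast', hcons', hgeo', hasc', hdesc', hA', hC'⟩ :=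
      ih (len - 2 ^ g) (by omega) (q + 2 ^ g) hq' hlen'
    set e : ℕ → ℕ × ℕ := fun i => if i = 0 then (q, q + 2 ^ g - 1) else e' (i - 1) with he
    have he0 : e 0 = (q, q + 2 ^ g - 1) := by simp [he]
    have heS : ∀ i, e (i + 1) = e' i := by intro i; simp [he]
    have hsz0 : (e 0).2 - (e 0).1 + 1 = 2 ^ g := by rw [he0]; simp; omega
    -- shared facts
    have hfst : (e 0).1 = q := by rw [he0]
    have hlast : (e (n' + 1 - 1)).2 = q + len - 1 := by
      have h1 : n' + 1 - 1 = (n' - 1) + 1 := by omega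
      rw [h1, heS, hlast']
      omega
    have hcons : ∀ i, i + 1 < n' + 1 → (e (i + 1)).1 = (e i).2 + 1 := by
      intro i hi
      cases i with
      | zero => rw [heS, hfst', he0]; omega
      | succ j => rw [heS, heS, hcons' j (by omega)]
    have hgeo : ∀ i, i < n' + 1 → IsGeo (e i).1 (e i).2 := by
      intro i hi
      cases i with
      | zero => rw [he0]; exact geo_block q g hq hdvd
      | succ j => rw [heS]; exact hgeo' j (by omega)
    by_cases hfit : L ≤ v
    · -- fit-limited: g = L, recursion remains fit-limited, fully descending, k0 = 0
      have hgL : g = L := min_eq_right hfit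
      have hlen2 : len < 2 ^ (g + 1) := by
        rw [hgL]; exact Nat.lt_pow_succ_log_self (by norm_num) len
      have h2g1 : 2 ^ (g + 1) = 2 * 2 ^ g := by ring
      have hlen'lt : len - 2 ^ g < 2 ^ g := by omega
      have hfit' : Nat.log 2 (len - 2 ^ g) ≤ padicValNat 2 (q + 2 ^ g) := by
        have h1 : Nat.log 2 (len - 2 ^ g) < g := Nat.log_lt_of_lt_pow (y := len - 2 ^ g) (by omega) hlen'lt
        have h2 : g ≤ padicValNat 2 (q + 2 ^ g) :=
          dvd_le_padicValNat (by omega) (dvd_add hdvd dvd_rfl)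
        omega
      obtain ⟨hk0'0, hfull'⟩ := hC' hfit'
      have hfull : ∀ i, 0 < i → i < n' + 1 →
          2 * ((e i).2 - (e i).1 + 1) ≤ (e (i - 1)).2 - (e (i - 1)).1 + 1 := by
        intro i h0 hi
        obtain ⟨j, rfl⟩ : ∃ j, i = j + 1 := ⟨i - 1, by omega⟩
        cases j with
        | zero =>
          rw [heS]
          simp only [Nat.add_sub_cancel, hsz0]
          rw [hA']
          have hm : min (padicValNat 2 (q + 2 ^ g)) (Nat.log 2 (len - 2 ^ g)) < g := by
            have := Nat.log_lt_of_lt_pow (y := len - 2 ^ g) (by omega) hlen'lt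
            omega
          calc 2 * 2 ^ min (padicValNat 2 (q + 2 ^ g)) (Nat.log 2 (len - 2 ^ g))
              = 2 ^ (min (padicValNat 2 (q + 2 ^ g)) (Nat.log 2 (len - 2 ^ g)) + 1) := by ring
            _ ≤ 2 ^ g := Nat.pow_le_pow_right (by norm_num) (by omega)
        | succ j =>
          rw [heS]
          have h1 : j + 1 + 1 - 1 = j + 1 := by omega
          rw [h1, heS]
          have := hfull' (j + 1) (by omega) (by omega)
          simpa using this
      refine ⟨n' + 1, 0, e, by omega, by omega, hfst, hlast, hcons, hgeo, ?_, ?_, ?_, ?_⟩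
      · intro i hi; omega
      · intro i h1 h2; exact hfull i (by omega) h2
      · rw [hsz0, hgdef]
      · exact fun _ => ⟨rfl, hfull⟩
    · -- alignment-limited: g = v < L
      have hgv : g = v := min_eq_left (by omega)
      have hg1L : g + 1 ≤ L := by omega
      have h2g1len : 2 ^ (g + 1) ≤ len :=
        le_trans (Nat.pow_le_pow_right (by norm_num) hg1L) (Nat.pow_log_le_self 2 (by omega))
      have h2g1 : 2 ^ (g + 1) = 2 * 2 ^ g := by ring
      have hdvd' : 2 ^ (g + 1) ∣ q + 2 ^ g := by
        obtain ⟨m, hm⟩ := hdvd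
        have hnd : ¬ 2 ^ (g + 1) ∣ q := by
          rw [hgv]; exact pow_succ_padicValNat_not_dvd (by omega)
        have hmodd : ¬ 2 ∣ m := by
          intro ⟨c, hc⟩
          exact hnd ⟨c, by rw [hm, hc]; ring⟩
        obtain ⟨c, hc⟩ : 2 ∣ m + 1 := by omega
        exact ⟨c, by rw [hm, show 2 ^ g * m + 2 ^ g = 2 ^ g * (m + 1) by ring, hc]; ring⟩
      have hv'g : g + 1 ≤ padicValNat 2 (q + 2 ^ g) :=
        dvd_le_padicValNat (by omega) hdvd'
      by_cases hfit' : Nat.log 2 (len - 2 ^ g) ≤ padicValNat 2 (q + 2 ^ g)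
      · -- next block is fit-limited: k0 = 0
        obtain ⟨hk0'0, hfull'⟩ := hC' hfit'
        refine ⟨n' + 1, 0, e, by omega, by omega, hfst, hlast, hcons, hgeo, ?_, ?_, ?_, ?_⟩
        · intro i hi; omega
        · intro i h1 h2
          obtain ⟨j, rfl⟩ : ∃ j, i = j + 1 + 1 := ⟨i - 2, by omega⟩
          rw [heS]
          have hh : j + 1 + 1 - 1 = j + 1 := by omega
          rw [hh, heS]
          have := hfull' (j + 1) (by omega) (by omega)
          simpa using this
        · rw [hsz0, hgdef]
        · intro h; exact absurd h hfit
      · -- next block is alignment-limited: k0 = k0' + 1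
        refine ⟨n' + 1, k0' + 1, e, by omega, by omega, hfst, hlast, hcons, hgeo, ?_, ?_, ?_, ?_⟩
        · intro i hi
          cases i with
          | zero =>
            rw [heS, hsz0, hA']
            have hmin : min (padicValNat 2 (q + 2 ^ g)) (Nat.log 2 (len - 2 ^ g))
                = padicValNat 2 (q + 2 ^ g) := min_eq_left (by omega)
            rw [hmin]
            calc 2 * 2 ^ g = 2 ^ (g + 1) := by ring
              _ ≤ 2 ^ padicValNat 2 (q + 2 ^ g) := Nat.pow_le_pow_right (by norm_num) hv'g
          | succ j =>
            rw [heS, heS]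
            exact hasc' j (by omega)
        · intro i h1 h2
          obtain ⟨j, rfl⟩ : ∃ j, i = j + 1 := ⟨i - 1, by omega⟩
          rw [heS]
          cases j with
          | zero => omega
          | succ j =>
            have hh : j + 1 + 1 - 1 = j + 1 := by omega
            rw [hh, heS]
            have := hdesc' (j + 1) (by omega) (by omega)
            simpa using this
        · rw [hsz0, hgdef]
        · intro h; exact absurd h hfit

/-- Geometric covering lemma: every interval `[q,s]` of positive naturals can be
partitioned into a finite sequence of pairwise disjoint consecutive intervals
`e 0, e 1, …, e (n−1)` (from left to right, with union `[q,s]`), all belonging to `𝓘`,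
together with a distinguished position `k0` (the position of `I_0`), such that the
sizes strictly double going rightwards before position `k0` (this is the sequence
`I_{−k}, …, I_0`, i.e. `|I_{−i}|/|I_{−i+1}| ≤ 1/2` for `1 ≤ i ≤ k`), and halve going
rightwards after position `k0 + 1` (this is the sequence `I_1, …, I_p`, i.e.
`|I_i|/|I_{i−1}| ≤ 1/2` for `2 ≤ i ≤ p`). -/
theorem geometric_covering (q s : ℕ) (hq : 1 ≤ q) (hqs : q ≤ s) :
    ∃ (n k0 : ℕ) (e : ℕ → ℕ × ℕ),
      0 < n ∧ k0 < n ∧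
      (e 0).1 = q ∧ (e (n - 1)).2 = s ∧
      (∀ i, i + 1 < n → (e (i + 1)).1 = (e i).2 + 1) ∧
      (∀ i, i < n → IsGeo (e i).1 (e i).2) ∧
      (∀ i, i + 1 ≤ k0 →
        2 * ((e i).2 - (e i).1 + 1) ≤ (e (i + 1)).2 - (e (i + 1)).1 + 1) ∧
      (∀ i, k0 + 1 < i → i < n →
        2 * ((e i).2 - (e i).1 + 1) ≤ (e (i - 1)).2 - (e (i - 1)).1 + 1) := by
  obtain ⟨n, k0, e, h1, h2, h3, h4, h5, h6, h7, h8, _, _⟩ :=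
    geo_main (s + 1 - q) q hq (by omega)
  refine ⟨n, k0, e, h1, h2, h3, ?_, h5, h6, h7, h8⟩
  rw [h4]; omega
end

section
/- Under the pseudo-weight setup, for every t ≥ 1 the total pseudo-weight satisfies W̃_t := Σ_{I ∈ 𝓘} w̃_t(I) ≤ t · (log₂(t) + 1). (Only intervals in 𝓘 with left endpoint at most t contribute a nonzero pseudo-weight, so the sum is finite.) -/
open scoped BigOperators

/-- The geometric interval family `𝓘`, as a set of pairs `(q, s)` representing the
integer interval `[q, s]`: `(q,s) ∈ 𝓘` iff `q = i·2^k` and `s = (i+1)·2^k − 1` for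
some `k ≥ 0` and `i ≥ 1`. -/
def geoSet : Set (ℕ × ℕ) :=
  {p | ∃ k i : ℕ, 1 ≤ i ∧ p.1 = i * 2 ^ k ∧ p.2 = (i + 1) * 2 ^ k - 1}

/-- `η_I = min{1/2, 1/√|I|}` for the interval `I = [q,s]` (of size `s − q + 1`). -/
noncomputable def eta (p : ℕ × ℕ) : ℝ :=
  min (1 / 2) (1 / Real.sqrt ((p.2 - p.1 + 1 : ℕ) : ℝ))

/-- The pseudo-weights `w̃_t(I)` for `I = [q,s]`, given instantaneous regrets `r`:
`w̃_t(I) = 0` for `t < q`; `w̃_q(I) = 1`;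
`w̃_t(I) = w̃_{t−1}(I)·(1 + η_I·r_{t−1}(I))` for `q < t ≤ s + 1`; and
`w̃_t(I) = w̃_{s+1}(I)` for `t > s + 1`.  (The indicator in the recursion below
makes the last two cases coincide, since `t − 1 ∈ I` exactly when `q < t ≤ s + 1`.) -/
noncomputable def wtilde (r : ℕ → ℕ × ℕ → ℝ) (p : ℕ × ℕ) : ℕ → ℝ
  | 0 => if p.1 = 0 then 1 else 0
  | (t + 1) =>
    if t + 1 < p.1 then 0
    else if t + 1 = p.1 then 1
    else wtilde r p t * (1 + eta p * (if p.1 ≤ t ∧ t ≤ p.2 then r t p else 0))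

/-- The weights `w_t(I) = η_I · w̃_t(I)` if `t ∈ I`, and `w_t(I) = 0` otherwise. -/
noncomputable def wfun (r : ℕ → ℕ × ℕ → ℝ) (p : ℕ × ℕ) (t : ℕ) : ℝ :=
  if p.1 ≤ t ∧ t ≤ p.2 then eta p * wtilde r p t else 0

section Aux

open Finset Set

lemma geo_fst_pos {p : ℕ × ℕ} (hp : p ∈ geoSet) : 1 ≤ p.1 := by
  obtain ⟨k, i, hi, h1, _⟩ := hp
  rw [h1]
  exact Nat.one_le_iff_ne_zero.mpr (by positivity)

lemma wtilde_eq_zero_of_lt (r : ℕ → ℕ × ℕ → ℝ) (p : ℕ × ℕ) :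
    ∀ t, t < p.1 → wtilde r p t = 0 := by
  intro t
  induction t with
  | zero => intro h; simp [wtilde]; omega
  | succ t ih => intro h; simp [wtilde, if_pos h]

lemma wtilde_succ (r : ℕ → ℕ × ℕ → ℝ) (p : ℕ × ℕ) (t : ℕ) :
    wtilde r p (t + 1) =
      wtilde r p t + wfun r p t * r t p + (if p.1 = t + 1 then 1 else 0) := by
  rcases lt_trichotomy (t + 1) p.1 with h | h | h
  · rw [wtilde_eq_zero_of_lt r p (t+1) h, wtilde_eq_zero_of_lt r p t (by omega)]
    have hw : wfun r p t = 0 := by unfold wfun; exact if_neg (by omega)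
    rw [hw, if_neg (show ¬ p.1 = t + 1 by omega)]; ring
  · have h0 : wtilde r p (t+1) = 1 := by
      simp only [wtilde]; rw [if_neg (by omega), if_pos h]
    rw [h0, wtilde_eq_zero_of_lt r p t (by omega), if_pos h.symm]
    have hw : wfun r p t = 0 := by unfold wfun; exact if_neg (by omega)
    rw [hw]; ring
  · have h0 : wtilde r p (t+1) =
        wtilde r p t * (1 + eta p * (if p.1 ≤ t ∧ t ≤ p.2 then r t p else 0)) := by
      simp only [wtilde]; rw [if_neg (by omega), if_neg (by omega)]
    rw [h0, if_neg (show ¬ p.1 = t + 1 by omega)]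
    unfold wfun
    split_ifs with hc <;> ring

/-- A finite superset of all intervals with left endpoint `≤ n`. -/
def geoF (n : ℕ) : Finset (ℕ × ℕ) :=
  (Finset.range (n + 1) ×ˢ Finset.range (n + 1)).image
    (fun ki => (ki.2 * 2 ^ ki.1, (ki.2 + 1) * 2 ^ ki.1 - 1))

lemma mem_geoF {p : ℕ × ℕ} (hp : p ∈ geoSet) {n : ℕ} (hn : p.1 ≤ n) : p ∈ geoF n := by
  obtain ⟨k, i, hi, h1, h2⟩ := hp
  have h2k : 2 ^ k ≤ n := le_trans (Nat.le_mul_of_pos_left _ (by omega)) (h1 ▸ hn)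
  have hk : k < n + 1 := by have := Nat.lt_two_pow_self (n := k); omega
  have hi' : i < n + 1 := by
    have : i ≤ i * 2 ^ k := Nat.le_mul_of_pos_right _ (Nat.pow_pos (n := k) (by norm_num))
    omega
  refine Finset.mem_image.mpr ⟨(k, i), Finset.mem_product.mpr ⟨Finset.mem_range.mpr hk,
    Finset.mem_range.mpr hi'⟩, ?_⟩
  rw [Prod.ext_iff]; exact ⟨h1.symm, h2.symm⟩

lemma indicator_wtilde_support (r : ℕ → ℕ × ℕ → ℝ) (t : ℕ) :
    ∀ p ∉ geoF t, geoSet.indicator (fun p => wtilde r p t) p = 0 := by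
  intro p hp
  by_cases hg : p ∈ geoSet
  · rw [Set.indicator_of_mem hg]
    by_cases hle : p.1 ≤ t
    · exact absurd (mem_geoF hg hle) hp
    · exact wtilde_eq_zero_of_lt r p t (by omega)
  · exact Set.indicator_of_notMem hg _

lemma indicator_wfun_support (r : ℕ → ℕ × ℕ → ℝ) (t : ℕ) :
    ∀ p ∉ geoF t, geoSet.indicator (fun p => wfun r p t * r t p) p = 0 := by
  intro p hp
  by_cases hg : p ∈ geoSet
  · rw [Set.indicator_of_mem hg]
    by_cases hle : p.1 ≤ t
    · exact absurd (mem_geoF hg hle) hp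
    · have hw : wfun r p t = 0 := by unfold wfun; exact if_neg (by omega)
      rw [hw, zero_mul]
  · exact Set.indicator_of_notMem hg _

/-- Finite superset of intervals starting exactly at `q`. -/
def startF (q : ℕ) : Finset (ℕ × ℕ) :=
  (Finset.range (Nat.log 2 q + 1)).image (fun k => (q, q + 2 ^ k - 1))

lemma indicator_start_support (q : ℕ) (hq : 1 ≤ q) :
    ∀ p ∉ startF q, geoSet.indicator (fun p => if p.1 = q then (1:ℝ) else 0) p = 0 := by
  intro p hp
  by_cases hg : p ∈ geoSet
  · rw [Set.indicator_of_mem hg]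
    rw [if_neg]
    intro hpq
    obtain ⟨k, i, hi, h1, h2⟩ := hg
    have h2k : 2 ^ k ≤ q := le_trans (Nat.le_mul_of_pos_left _ (by omega)) (h1 ▸ hpq.le)
    have hk : k ≤ Nat.log 2 q :=
      (Nat.le_log_iff_pow_le (by norm_num) (by omega)).mpr h2k
    apply hp
    refine Finset.mem_image.mpr ⟨k, Finset.mem_range.mpr (by omega), ?_⟩
    rw [Prod.ext_iff]
    constructor
    · exact hpq.symm
    · simp only
      rw [h2, ← hpq, h1, add_mul, one_mul]
  · exact Set.indicator_of_notMem hg _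

lemma start_sum_le (q : ℕ) (hq : 1 ≤ q) :
    ∑' p : ℕ × ℕ, geoSet.indicator (fun p => if p.1 = q then (1:ℝ) else 0) p ≤
      (Nat.log 2 q : ℝ) + 1 := by
  rw [tsum_eq_sum (indicator_start_support q hq)]
  calc ∑ p ∈ startF q, geoSet.indicator (fun p => if p.1 = q then (1:ℝ) else 0) p
      ≤ ∑ _p ∈ startF q, (1:ℝ) := by
        apply Finset.sum_le_sum
        intro p _
        by_cases hg : p ∈ geoSet
        · rw [Set.indicator_of_mem hg]
          split <;> norm_num
        · rw [Set.indicator_of_notMem hg]; norm_num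
    _ = (startF q).card := by rw [Finset.sum_const, nsmul_eq_mul, mul_one]
    _ ≤ ((Finset.range (Nat.log 2 q + 1)).card : ℝ) := by
        exact_mod_cast Finset.card_image_le
    _ = (Nat.log 2 q : ℝ) + 1 := by simp

lemma main_bound (r : ℕ → ℕ × ℕ → ℝ)
    (hbal' : ∀ t : ℕ, 1 ≤ t →
      ∑' p : ℕ × ℕ, geoSet.indicator (fun p => wfun r p t * r t p) p = 0) :
    ∀ t : ℕ, ∑' p : ℕ × ℕ, geoSet.indicator (fun p => wtilde r p t) p ≤
      ∑ q ∈ Finset.Icc 1 t, ((Nat.log 2 q : ℝ) + 1) := by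
  intro t
  induction t with
  | zero =>
    have h0 : ∀ p : ℕ × ℕ, geoSet.indicator (fun p => wtilde r p 0) p = 0 := by
      intro p
      by_cases hg : p ∈ geoSet
      · rw [Set.indicator_of_mem hg]
        have := geo_fst_pos hg
        simp [wtilde]; omega
      · exact Set.indicator_of_notMem hg _
    simp [tsum_congr h0]
  | succ t ih =>
    have hpt : ∀ p : ℕ × ℕ,
        geoSet.indicator (fun p => wtilde r p (t+1)) p =
          geoSet.indicator (fun p => wtilde r p t) p
          + geoSet.indicator (fun p => wfun r p t * r t p) p
          + geoSet.indicator (fun p => if p.1 = t + 1 then (1:ℝ) else 0) p := by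
      intro p
      by_cases hg : p ∈ geoSet
      · simp only [Set.indicator_of_mem hg]
        exact wtilde_succ r p t
      · simp [Set.indicator_of_notMem hg]
    have s1 : Summable (fun p : ℕ × ℕ => geoSet.indicator (fun p => wtilde r p t) p) :=
      summable_of_ne_finset_zero (indicator_wtilde_support r t)
    have s2 : Summable (fun p : ℕ × ℕ => geoSet.indicator (fun p => wfun r p t * r t p) p) :=
      summable_of_ne_finset_zero (indicator_wfun_support r t)
    have s3 : Summable (fun p : ℕ × ℕ =>
        geoSet.indicator (fun p => if p.1 = t + 1 then (1:ℝ) else 0) p) :=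
      summable_of_ne_finset_zero (indicator_start_support (t+1) (by omega))
    have hmid : ∑' p : ℕ × ℕ, geoSet.indicator (fun p => wfun r p t * r t p) p = 0 := by
      rcases Nat.eq_zero_or_pos t with ht0 | ht1
      · subst ht0
        have : ∀ p : ℕ × ℕ, geoSet.indicator (fun p => wfun r p 0 * r 0 p) p = 0 := by
          intro p
          by_cases hg : p ∈ geoSet
          · rw [Set.indicator_of_mem hg]
            have := geo_fst_pos hg
            have hw : wfun r p 0 = 0 := by unfold wfun; exact if_neg (by omega)
            rw [hw, zero_mul]
          · exact Set.indicator_of_notMem hg _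
        simp [tsum_congr this]
      · exact hbal' t ht1
    calc ∑' p : ℕ × ℕ, geoSet.indicator (fun p => wtilde r p (t+1)) p
        = ∑' p : ℕ × ℕ, (geoSet.indicator (fun p => wtilde r p t) p
          + geoSet.indicator (fun p => wfun r p t * r t p) p
          + geoSet.indicator (fun p => if p.1 = t + 1 then (1:ℝ) else 0) p) :=
          tsum_congr hpt
      _ = (∑' p : ℕ × ℕ, geoSet.indicator (fun p => wtilde r p t) p)
          + (∑' p : ℕ × ℕ, geoSet.indicator (fun p => wfun r p t * r t p) p)
          + (∑' p : ℕ × ℕ, geoSet.indicator (fun p => if p.1 = t + 1 then (1:ℝ) else 0) p) := by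
          rw [Summable.tsum_add (s1.add s2) s3, Summable.tsum_add s1 s2]
      _ ≤ (∑ q ∈ Finset.Icc 1 t, ((Nat.log 2 q : ℝ) + 1)) + 0
          + ((Nat.log 2 (t+1) : ℝ) + 1) := by
          exact add_le_add (add_le_add ih (le_of_eq hmid))
            (start_sum_le (t+1) (by omega))
      _ = ∑ q ∈ Finset.Icc 1 (t+1), ((Nat.log 2 q : ℝ) + 1) := by
          rw [Finset.sum_Icc_succ_top (by omega)]
          ring

end Aux

/-- Under the pseudo-weight setup (with `r_t(I) ∈ [−1,1]` and the balance condition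
`Σ_{I ∈ 𝓘} w_t(I)·r_t(I) = 0`), for every `t ≥ 1` the total pseudo-weight satisfies
`W̃_t = Σ_{I ∈ 𝓘} w̃_t(I) ≤ t·(log₂ t + 1)`. -/
theorem total_pseudo_weight_bound (r : ℕ → ℕ × ℕ → ℝ)
    (hr : ∀ (t : ℕ) (p : ℕ × ℕ), p ∈ geoSet → -1 ≤ r t p ∧ r t p ≤ 1)
    (hbal : ∀ t : ℕ, 1 ≤ t → ∑' p : geoSet, wfun r (p : ℕ × ℕ) t * r t (p : ℕ × ℕ) = 0)
    (t : ℕ) (ht : 1 ≤ t) :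
    ∑' p : geoSet, wtilde r (p : ℕ × ℕ) t ≤ (t : ℝ) * (Real.logb 2 t + 1) := by
  have key := main_bound r (fun u hu => by
    rw [← tsum_subtype geoSet (fun p => wfun r p u * r u p)]
    exact hbal u hu) t
  rw [tsum_subtype geoSet (fun p => wtilde r p t)]
  refine le_trans key ?_
  have hbound : ∀ q ∈ Finset.Icc 1 t, ((Nat.log 2 q : ℝ) + 1) ≤ Real.logb 2 t + 1 := by
    intro q hq
    rw [Finset.mem_Icc] at hq
    have hq0 : q ≠ 0 := by omega
    have h1 : (2:ℝ) ^ (Nat.log 2 q : ℝ) ≤ (t:ℝ) := by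
      rw [Real.rpow_natCast]
      exact_mod_cast le_trans (Nat.pow_log_le_self 2 hq0) hq.2
    have h2 : (Nat.log 2 q : ℝ) ≤ Real.logb 2 t :=
      (Real.le_logb_iff_rpow_le (by norm_num) (by positivity)).mpr h1
    linarith
  calc ∑ q ∈ Finset.Icc 1 t, ((Nat.log 2 q : ℝ) + 1)
      ≤ ∑ _q ∈ Finset.Icc 1 t, (Real.logb 2 t + 1) := Finset.sum_le_sum hbound
    _ = (t : ℝ) * (Real.logb 2 t + 1) := by
        rw [Finset.sum_const, nsmul_eq_mul, Nat.card_Icc]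
        norm_num
end

section
/- Let α ∈ (0,1) and C > 0, and let R be a real-valued function on intervals [q,s] of positive natural numbers such that: (i) (partition subadditivity) whenever an interval I is partitioned into pairwise disjoint consecutive intervals I_1, …, I_n whose union is I, R(I) ≤ Σ_{j=1}^{n} R(I_j); and (ii) for every interval I = [q,s] belonging to the geometric interval family 𝓘, R(I) ≤ C·|I|^α + 5·log₂(s+1)·√|I|. Then for every interval I = [q,s] of positive natural numbers, R(I) ≤ (4/(2^α − 1))·C·|I|^α + 40·log₂(s+1)·√|I|. -/
open scoped BigOperators

private lemma isGeo_block (q k : ℕ) (hq : 1 ≤ q) (hdvd : 2 ^ k ∣ q) :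
    IsGeo q (q + 2 ^ k - 1) := by
  obtain ⟨i, hi⟩ := hdvd
  have hk : 1 ≤ 2 ^ k := Nat.one_le_two_pow
  have hi1 : 1 ≤ i := by
    rcases Nat.eq_zero_or_pos i with h | h
    · subst h; simp [hi] at hq
    · exact h
  refine ⟨k, i, hi1, by rw [hi, Nat.mul_comm], ?_⟩
  rw [Nat.add_mul, Nat.one_mul, hi, Nat.mul_comm]

private lemma saol_split (R : ℕ × ℕ → ℝ)
    (hsub : ∀ (n : ℕ) (e : ℕ → ℕ × ℕ) (q s : ℕ), 0 < n → 1 ≤ q →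
      (e 0).1 = q → (e (n - 1)).2 = s →
      (∀ i, i + 1 < n → (e (i + 1)).1 = (e i).2 + 1) →
      (∀ i, i < n → (e i).1 ≤ (e i).2) →
      R (q, s) ≤ ∑ i ∈ Finset.range n, R (e i))
    (q m s : ℕ) (hq : 1 ≤ q) (hqm : q ≤ m) (hms : m < s) :
    R (q, s) ≤ R (q, m) + R (m + 1, s) := by
  have h := hsub 2 (fun i => if i = 0 then (q, m) else (m + 1, s)) q s (by norm_num) hq
    (by simp) (by norm_num)
    (by intro i hi; have : i = 0 := by omega
        subst this; norm_num)
    (by intro i hi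
        interval_cases i
        · simpa using hqm
        · simpa using hms)
  simpa [Finset.sum_range_succ] using h

private lemma sqrt_two_pow (J : ℕ) : Real.sqrt 2 ^ J = Real.sqrt (((2 ^ J : ℕ) : ℝ)) := by
  induction J with
  | zero => simp
  | succ J ih =>
    rw [pow_succ, ih, ← Real.sqrt_mul (by positivity)]
    norm_num [pow_succ]

private lemma rpow_cast_pow (α : ℝ) (J : ℕ) :
    ((2 ^ J : ℕ) : ℝ) ^ α = ((2 : ℝ) ^ α) ^ J := by
  push_cast
  rw [← Real.rpow_natCast (2 : ℝ) J, ← Real.rpow_natCast ((2:ℝ) ^ α) J,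
    ← Real.rpow_mul (by norm_num), ← Real.rpow_mul (by norm_num), mul_comm]

private lemma claimD (α C : ℝ) (hC : 0 ≤ C) (R : ℕ × ℕ → ℝ)
    (hsplit : ∀ q m s : ℕ, 1 ≤ q → q ≤ m → m < s → R (q, s) ≤ R (q, m) + R (m + 1, s))
    (hgeo : ∀ q s : ℕ, IsGeo q s →
      R (q, s) ≤ C * ((s - q + 1 : ℕ) : ℝ) ^ α +
        5 * Real.logb 2 ((s : ℝ) + 1) * Real.sqrt ((s - q + 1 : ℕ) : ℝ)) :
    ∀ n q s : ℕ, s - q + 1 = n → 1 ≤ q → q ≤ s → 2 ^ (Nat.log 2 n) ∣ q →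
      R (q, s) ≤ C * (∑ j ∈ Finset.range (Nat.log 2 n + 1), ((2 : ℝ) ^ α) ^ j) +
        5 * Real.logb 2 ((s : ℝ) + 1) *
          ∑ j ∈ Finset.range (Nat.log 2 n + 1), Real.sqrt 2 ^ j := by
  intro n
  induction n using Nat.strong_induction_on with
  | _ n IH =>
  intro q s hn hq hqs hdvd
  set J := Nat.log 2 n with hJ
  have hn1 : 1 ≤ n := by omega
  have hx0 : (0 : ℝ) ≤ (2 : ℝ) ^ α := by positivity
  have hy0 : (0 : ℝ) ≤ Real.sqrt 2 := Real.sqrt_nonneg 2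
  have hL0 : 0 ≤ Real.logb 2 ((s : ℝ) + 1) := Real.logb_nonneg (by norm_num) (by have : (0:ℝ) ≤ (s:ℝ) := Nat.cast_nonneg s; linarith)
  have hJle : 2 ^ J ≤ n := Nat.pow_log_le_self 2 (by omega)
  have hJlt : n < 2 ^ (J + 1) := Nat.lt_pow_succ_log_self (by norm_num) n
  have hterm1 : ∀ K, ((2 : ℝ) ^ α) ^ K ≤ ∑ j ∈ Finset.range (K + 1), ((2 : ℝ) ^ α) ^ j :=
    fun K => Finset.single_le_sum (f := fun j => ((2:ℝ)^α)^j)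
      (fun i _ => by positivity) (Finset.self_mem_range_succ K)
  have hterm2 : ∀ K, Real.sqrt 2 ^ K ≤ ∑ j ∈ Finset.range (K + 1), Real.sqrt 2 ^ j :=
    fun K => Finset.single_le_sum (f := fun j => Real.sqrt 2 ^ j)
      (fun i _ => by positivity) (Finset.self_mem_range_succ K)
  rcases eq_or_lt_of_le hJle with heq | hlt
  · -- n = 2^J : single geometric block
    have hs : s = q + 2 ^ J - 1 := by omega
    have hG := hgeo q s (hs ▸ isGeo_block q J hq hdvd)
    have hsz : ((s - q + 1 : ℕ) : ℝ) = ((2 ^ J : ℕ) : ℝ) := by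
      congr 1; omega
    rw [hsz, rpow_cast_pow, ← sqrt_two_pow] at hG
    refine hG.trans ?_
    have h1 := hterm1 J
    have h2 := hterm2 J
    have := mul_le_mul_of_nonneg_left h1 hC
    have := mul_le_mul_of_nonneg_left h2 (by linarith : (0:ℝ) ≤ 5 * Real.logb 2 ((s : ℝ) + 1))
    linarith
  · -- split off the block [q, q + 2^J - 1]
    set m := q + 2 ^ J - 1 with hm
    have h2J1 : 1 ≤ 2 ^ J := Nat.one_le_two_pow
    have hqm : q ≤ m := by omega
    have hms : m < s := by omega
    have hR := hsplit q m s hq hqm hms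
    -- geometric bound on the first block
    have hG := hgeo q m (isGeo_block q J hq hdvd)
    have hsz : ((m - q + 1 : ℕ) : ℝ) = ((2 ^ J : ℕ) : ℝ) := by congr 1; omega
    rw [hsz, rpow_cast_pow, ← sqrt_two_pow] at hG
    have hLm : Real.logb 2 ((m : ℝ) + 1) ≤ Real.logb 2 ((s : ℝ) + 1) := by
      have hcast : (m : ℝ) + 1 ≤ (s : ℝ) + 1 := by
        have : (m : ℝ) ≤ (s : ℝ) := by exact_mod_cast hms.le
        linarith
      exact Real.logb_le_logb_of_le (by norm_num) (by positivity) hcast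
    have hG' : R (q, m) ≤ C * ((2 : ℝ) ^ α) ^ J +
        5 * Real.logb 2 ((s : ℝ) + 1) * Real.sqrt 2 ^ J := by
      have hy : (0:ℝ) ≤ Real.sqrt 2 ^ J := by positivity
      nlinarith [mul_le_mul_of_nonneg_right hLm hy]
    -- inductive bound on the rest
    set n' := s - (m + 1) + 1 with hn'
    have hn'n : n' = n - 2 ^ J := by omega
    have hn'lt : n' < n := by omega
    have hn'1 : 1 ≤ n' := by omega
    set J' := Nat.log 2 n' with hJ'
    have hJ'J : J' < J := by
      apply Nat.log_lt_of_lt_pow (by omega)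
      have : 2 ^ (J + 1) = 2 ^ J + 2 ^ J := by rw [pow_succ]; omega
      omega
    have hdvd' : 2 ^ J' ∣ m + 1 := by
      have h1 : m + 1 = q + 2 ^ J := by omega
      rw [h1]
      exact (pow_dvd_pow 2 hJ'J.le).trans (Nat.dvd_add hdvd dvd_rfl)
    have hIH := IH n' hn'lt (m + 1) s rfl (by omega) (by omega) hdvd'
    -- combine
    have hS1 : ((2 : ℝ) ^ α) ^ J + ∑ j ∈ Finset.range (J' + 1), ((2 : ℝ) ^ α) ^ j ≤
        ∑ j ∈ Finset.range (J + 1), ((2 : ℝ) ^ α) ^ j := by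
      conv_rhs => rw [Finset.sum_range_succ]
      have : ∑ j ∈ Finset.range (J' + 1), ((2 : ℝ) ^ α) ^ j ≤
          ∑ j ∈ Finset.range J, ((2 : ℝ) ^ α) ^ j :=
        Finset.sum_le_sum_of_subset_of_nonneg
          (Finset.range_subset_range.mpr (by omega)) (fun i _ _ => by positivity)
      linarith
    have hS2 : Real.sqrt 2 ^ J + ∑ j ∈ Finset.range (J' + 1), Real.sqrt 2 ^ j ≤
        ∑ j ∈ Finset.range (J + 1), Real.sqrt 2 ^ j := by
      conv_rhs => rw [Finset.sum_range_succ]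
      have : ∑ j ∈ Finset.range (J' + 1), Real.sqrt 2 ^ j ≤
          ∑ j ∈ Finset.range J, Real.sqrt 2 ^ j :=
        Finset.sum_le_sum_of_subset_of_nonneg
          (Finset.range_subset_range.mpr (by omega)) (fun i _ _ => by positivity)
      linarith
    have hc1 := mul_le_mul_of_nonneg_left hS1 hC
    have hc2 := mul_le_mul_of_nonneg_left hS2
      (by linarith : (0:ℝ) ≤ 5 * Real.logb 2 ((s : ℝ) + 1))
    rw [mul_add] at hc1 hc2
    linarith

private lemma claimA (α C : ℝ) (hC : 0 ≤ C) (R : ℕ × ℕ → ℝ)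
    (hsplit : ∀ q m s : ℕ, 1 ≤ q → q ≤ m → m < s → R (q, s) ≤ R (q, m) + R (m + 1, s))
    (hgeo : ∀ q s : ℕ, IsGeo q s →
      R (q, s) ≤ C * ((s - q + 1 : ℕ) : ℝ) ^ α +
        5 * Real.logb 2 ((s : ℝ) + 1) * Real.sqrt ((s - q + 1 : ℕ) : ℝ)) :
    ∀ n q s v : ℕ, s - q + 1 = n → 1 ≤ q → q ≤ s → 2 ^ v ∣ q →
      R (q, s) ≤ (C * (∑ j ∈ Finset.range (Nat.log 2 n + 1), ((2 : ℝ) ^ α) ^ j) +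
        5 * Real.logb 2 ((s : ℝ) + 1) *
          ∑ j ∈ Finset.range (Nat.log 2 n + 1), Real.sqrt 2 ^ j) +
        (C * (∑ j ∈ Finset.Ico v (Nat.log 2 n), ((2 : ℝ) ^ α) ^ j) +
          5 * Real.logb 2 ((s : ℝ) + 1) *
            ∑ j ∈ Finset.Ico v (Nat.log 2 n), Real.sqrt 2 ^ j) := by
  intro n
  induction n using Nat.strong_induction_on with
  | _ n IH =>
  intro q s v hn hq hqs hdvd
  set J := Nat.log 2 n with hJ
  have hn1 : 1 ≤ n := by omega
  have hL0 : 0 ≤ Real.logb 2 ((s : ℝ) + 1) :=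
    Real.logb_nonneg (by norm_num) (by have : (0:ℝ) ≤ (s:ℝ) := Nat.cast_nonneg s; linarith)
  have hJle : 2 ^ J ≤ n := Nat.pow_log_le_self 2 (by omega)
  set w := padicValNat 2 q with hw
  have hvw : v ≤ w := by
    rw [hw]
    exact (padicValNat_dvd_iff_le (by omega)).mp hdvd
  have hwdvd : 2 ^ w ∣ q := pow_padicValNat_dvd
  rcases le_or_gt J w with hJw | hwJ
  · -- decreasing phase applies
    have hD := claimD α C hC R hsplit hgeo n q s hn hq hqs
      ((pow_dvd_pow 2 hJw).trans hwdvd)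
    have h1 : (0:ℝ) ≤ C * ∑ j ∈ Finset.Ico v J, ((2 : ℝ) ^ α) ^ j := by positivity
    have h2 : (0:ℝ) ≤ 5 * Real.logb 2 ((s : ℝ) + 1) *
        ∑ j ∈ Finset.Ico v J, Real.sqrt 2 ^ j := by positivity
    linarith
  · -- split off block of size 2^w
    have h2w1 : 1 ≤ 2 ^ w := Nat.one_le_two_pow
    have h2wn : 2 ^ w < n := lt_of_lt_of_le (Nat.pow_lt_pow_right (by norm_num) hwJ) hJle
    set m := q + 2 ^ w - 1 with hm
    have hqm : q ≤ m := by omega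
    have hms : m < s := by omega
    have hR := hsplit q m s hq hqm hms
    have hG := hgeo q m (isGeo_block q w hq hwdvd)
    have hsz : ((m - q + 1 : ℕ) : ℝ) = ((2 ^ w : ℕ) : ℝ) := by congr 1; omega
    rw [hsz, rpow_cast_pow, ← sqrt_two_pow] at hG
    have hLm : Real.logb 2 ((m : ℝ) + 1) ≤ Real.logb 2 ((s : ℝ) + 1) := by
      have hcast : (m : ℝ) + 1 ≤ (s : ℝ) + 1 := by
        have : (m : ℝ) ≤ (s : ℝ) := by exact_mod_cast hms.le
        linarith
      exact Real.logb_le_logb_of_le (by norm_num) (by positivity) hcast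
    have hG' : R (q, m) ≤ C * ((2 : ℝ) ^ α) ^ w +
        5 * Real.logb 2 ((s : ℝ) + 1) * Real.sqrt 2 ^ w := by
      have hy : (0:ℝ) ≤ Real.sqrt 2 ^ w := by positivity
      nlinarith [mul_le_mul_of_nonneg_right hLm hy]
    -- the remainder
    set n' := s - (m + 1) + 1 with hn'
    have hn'lt : n' < n := by omega
    have hn'1 : 1 ≤ n' := by omega
    set J' := Nat.log 2 n' with hJ'
    have hJ'J : J' ≤ J := Nat.log_mono_right (by omega)
    have hdvd' : 2 ^ (w + 1) ∣ m + 1 := by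
      have hndvd : ¬ 2 ^ (w + 1) ∣ q := pow_succ_padicValNat_not_dvd (by omega)
      obtain ⟨u, hu⟩ := hwdvd
      have hu2 : ¬ 2 ∣ u := by
        rintro ⟨t, rfl⟩
        exact hndvd ⟨t, by rw [hu, pow_succ]; ring⟩
      obtain ⟨t, ht⟩ : 2 ∣ (u + 1) := by omega
      refine ⟨t, ?_⟩
      have hm1 : m + 1 = q + 2 ^ w := by omega
      rw [hm1, hu, pow_succ]
      calc 2 ^ w * u + 2 ^ w = 2 ^ w * (u + 1) := by ring
        _ = 2 ^ w * (2 * t) := by rw [ht]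
        _ = 2 ^ w * 2 * t := by ring
    have hIH := IH n' hn'lt (m + 1) s (w + 1) rfl (by omega) (by omega) hdvd'
    rw [← hJ'] at hIH
    -- monotonicity of all four sums
    have hpos1 : ∀ i ∈ Finset.range (J + 1) \ Finset.range (J' + 1), (0:ℝ) ≤ ((2:ℝ)^α) ^ i :=
      fun i _ => by positivity
    have hmono1 : ∑ j ∈ Finset.range (J' + 1), ((2 : ℝ) ^ α) ^ j ≤
        ∑ j ∈ Finset.range (J + 1), ((2 : ℝ) ^ α) ^ j :=
      Finset.sum_le_sum_of_subset_of_nonneg (Finset.range_subset_range.mpr (by omega))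
        (fun i _ _ => by positivity)
    have hmono2 : ∑ j ∈ Finset.range (J' + 1), Real.sqrt 2 ^ j ≤
        ∑ j ∈ Finset.range (J + 1), Real.sqrt 2 ^ j :=
      Finset.sum_le_sum_of_subset_of_nonneg (Finset.range_subset_range.mpr (by omega))
        (fun i _ _ => by positivity)
    have hIco1 : ((2 : ℝ) ^ α) ^ w + ∑ j ∈ Finset.Ico (w + 1) J', ((2 : ℝ) ^ α) ^ j ≤
        ∑ j ∈ Finset.Ico v J, ((2 : ℝ) ^ α) ^ j := by
      have hsub1 : ∑ j ∈ Finset.Ico (w + 1) J', ((2 : ℝ) ^ α) ^ j ≤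
          ∑ j ∈ Finset.Ico (w + 1) J, ((2 : ℝ) ^ α) ^ j :=
        Finset.sum_le_sum_of_subset_of_nonneg
          (Finset.Ico_subset_Ico le_rfl hJ'J) (fun i _ _ => by positivity)
      have hbot : ∑ j ∈ Finset.Ico w J, ((2 : ℝ) ^ α) ^ j =
          ((2 : ℝ) ^ α) ^ w + ∑ j ∈ Finset.Ico (w + 1) J, ((2 : ℝ) ^ α) ^ j :=
        Finset.sum_eq_sum_Ico_succ_bot hwJ _
      have hsub2 : ∑ j ∈ Finset.Ico w J, ((2 : ℝ) ^ α) ^ j ≤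
          ∑ j ∈ Finset.Ico v J, ((2 : ℝ) ^ α) ^ j :=
        Finset.sum_le_sum_of_subset_of_nonneg
          (Finset.Ico_subset_Ico hvw le_rfl) (fun i _ _ => by positivity)
      linarith
    have hIco2 : Real.sqrt 2 ^ w + ∑ j ∈ Finset.Ico (w + 1) J', Real.sqrt 2 ^ j ≤
        ∑ j ∈ Finset.Ico v J, Real.sqrt 2 ^ j := by
      have hsub1 : ∑ j ∈ Finset.Ico (w + 1) J', Real.sqrt 2 ^ j ≤
          ∑ j ∈ Finset.Ico (w + 1) J, Real.sqrt 2 ^ j :=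
        Finset.sum_le_sum_of_subset_of_nonneg
          (Finset.Ico_subset_Ico le_rfl hJ'J) (fun i _ _ => by positivity)
      have hbot : ∑ j ∈ Finset.Ico w J, Real.sqrt 2 ^ j =
          Real.sqrt 2 ^ w + ∑ j ∈ Finset.Ico (w + 1) J, Real.sqrt 2 ^ j :=
        Finset.sum_eq_sum_Ico_succ_bot hwJ _
      have hsub2 : ∑ j ∈ Finset.Ico w J, Real.sqrt 2 ^ j ≤
          ∑ j ∈ Finset.Ico v J, Real.sqrt 2 ^ j :=
        Finset.sum_le_sum_of_subset_of_nonneg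
          (Finset.Ico_subset_Ico hvw le_rfl) (fun i _ _ => by positivity)
      linarith
    have hc1 := mul_le_mul_of_nonneg_left hmono1 hC
    have hc2 := mul_le_mul_of_nonneg_left hmono2
      (by linarith : (0:ℝ) ≤ 5 * Real.logb 2 ((s : ℝ) + 1))
    have hc3 := mul_le_mul_of_nonneg_left hIco1 hC
    have hc4 := mul_le_mul_of_nonneg_left hIco2
      (by linarith : (0:ℝ) ≤ 5 * Real.logb 2 ((s : ℝ) + 1))
    rw [mul_add] at hc3 hc4
    linarith

/-- Abstract form of Theorem 1 (regret bound of SAOL on arbitrary intervals).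
Let `α ∈ (0,1)`, `C > 0`, and let `R` be a real-valued function on intervals `[q,s]`
of positive naturals (represented as pairs `(q,s)`) such that:
(i) `R` is subadditive under partitions of an interval into pairwise disjoint
consecutive intervals, and
(ii) `R([q,s]) ≤ C·|I|^α + 5·log₂(s+1)·√|I|` for every `[q,s] ∈ 𝓘`.
Then for every interval `[q,s]` of positive naturals,
`R([q,s]) ≤ (4/(2^α − 1))·C·|I|^α + 40·log₂(s+1)·√|I|`. -/
theorem saol_regret_bound (α C : ℝ) (hα : 0 < α ∧ α < 1) (hC : 0 < C)
    (R : ℕ × ℕ → ℝ)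
    (hsub : ∀ (n : ℕ) (e : ℕ → ℕ × ℕ) (q s : ℕ), 0 < n → 1 ≤ q →
      (e 0).1 = q → (e (n - 1)).2 = s →
      (∀ i, i + 1 < n → (e (i + 1)).1 = (e i).2 + 1) →
      (∀ i, i < n → (e i).1 ≤ (e i).2) →
      R (q, s) ≤ ∑ i ∈ Finset.range n, R (e i))
    (hgeo : ∀ q s : ℕ, IsGeo q s →
      R (q, s) ≤ C * ((s - q + 1 : ℕ) : ℝ) ^ α +
        5 * Real.logb 2 ((s : ℝ) + 1) * Real.sqrt ((s - q + 1 : ℕ) : ℝ))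
    (q s : ℕ) (hq : 1 ≤ q) (hqs : q ≤ s) :
    R (q, s) ≤ (4 / ((2 : ℝ) ^ α - 1)) * C * ((s - q + 1 : ℕ) : ℝ) ^ α +
      40 * Real.logb 2 ((s : ℝ) + 1) * Real.sqrt ((s - q + 1 : ℕ) : ℝ) := by
  obtain ⟨hα0, hα1⟩ := hα
  have hsplit : ∀ q m s : ℕ, 1 ≤ q → q ≤ m → m < s → R (q, s) ≤ R (q, m) + R (m + 1, s) :=
    fun q m s hq hqm hms => saol_split R hsub q m s hq hqm hms
  set n := s - q + 1 with hn
  set J := Nat.log 2 n with hJd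
  set x := (2 : ℝ) ^ α with hxd
  set y := Real.sqrt 2 with hyd
  set L := Real.logb 2 ((s : ℝ) + 1) with hLd
  set N := ((s - q + 1 : ℕ) : ℝ) with hNd
  have hn1 : 1 ≤ n := by omega
  have hL0 : 0 ≤ L :=
    Real.logb_nonneg (by norm_num) (by have : (0:ℝ) ≤ (s:ℝ) := Nat.cast_nonneg s; linarith)
  have hA := claimA α C hC.le R hsplit hgeo n q s 0 rfl hq hqs (by simpa using one_dvd q)
  rw [← hJd, ← hxd, ← hyd, ← hLd] at hA
  -- collapse the Ico sums into the range sums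
  have hI1 : ∑ j ∈ Finset.Ico 0 J, x ^ j ≤ ∑ j ∈ Finset.range (J + 1), x ^ j := by
    have hx0 : (0:ℝ) ≤ x := by rw [hxd]; positivity
    refine Finset.sum_le_sum_of_subset_of_nonneg ?_ (fun i _ _ => by positivity)
    intro i hi
    simp only [Finset.mem_Ico, Finset.mem_range] at hi ⊢
    omega
  have hI2 : ∑ j ∈ Finset.Ico 0 J, y ^ j ≤ ∑ j ∈ Finset.range (J + 1), y ^ j := by
    have hy0 : (0:ℝ) ≤ y := Real.sqrt_nonneg 2
    refine Finset.sum_le_sum_of_subset_of_nonneg ?_ (fun i _ _ => by positivity)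
    intro i hi
    simp only [Finset.mem_Ico, Finset.mem_range] at hi ⊢
    omega
  have hmain : R (q, s) ≤ 2 * (C * ∑ j ∈ Finset.range (J + 1), x ^ j) +
      2 * (5 * L * ∑ j ∈ Finset.range (J + 1), y ^ j) := by
    have hc1 := mul_le_mul_of_nonneg_left hI1 hC.le
    have hc2 := mul_le_mul_of_nonneg_left hI2 (by linarith : (0:ℝ) ≤ 5 * L)
    linarith
  -- now bound the geometric sums
  have hx1 : (1 : ℝ) < x := by
    rw [hxd]
    rw [Real.one_lt_rpow_iff_of_pos (by norm_num)]
    exact Or.inl ⟨one_lt_two, hα0⟩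
  have hy1 : (1 : ℝ) < y := by
    have h2 : y ^ 2 = 2 := Real.sq_sqrt (by norm_num)
    have h0 : (0:ℝ) ≤ y := Real.sqrt_nonneg 2
    nlinarith
  have hN1 : (1 : ℝ) ≤ N := by rw [hNd]; exact_mod_cast hn1
  have hNα : (0 : ℝ) ≤ N ^ α := by positivity
  have hJle : 2 ^ J ≤ n := Nat.pow_log_le_self 2 (by omega)
  -- x^J ≤ N^α  and  y^J ≤ √N
  have hxJ : x ^ J ≤ N ^ α := by
    rw [hxd, ← rpow_cast_pow]
    exact Real.rpow_le_rpow (by positivity) (by rw [hNd]; exact_mod_cast hJle) hα0.le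
  have hyJ : y ^ J ≤ Real.sqrt N := by
    rw [hyd, sqrt_two_pow]
    exact Real.sqrt_le_sqrt (by rw [hNd]; exact_mod_cast hJle)
  have hx2 : x ≤ 2 := by
    rw [hxd]
    calc (2:ℝ) ^ α ≤ (2:ℝ) ^ (1:ℝ) := Real.rpow_le_rpow_of_exponent_le (by norm_num) hα1.le
      _ = 2 := Real.rpow_one 2
  -- geometric sum formulas
  have hgs1 : ∑ j ∈ Finset.range (J + 1), x ^ j = (x ^ (J + 1) - 1) / (x - 1) :=
    geom_sum_eq hx1.ne' (J + 1)
  have hgs2 : ∑ j ∈ Finset.range (J + 1), y ^ j = (y ^ (J + 1) - 1) / (y - 1) :=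
    geom_sum_eq hy1.ne' (J + 1)
  have hxpos : (0:ℝ) < x - 1 := by linarith
  have hypos : (0:ℝ) < y - 1 := by linarith
  have hb1 : ∑ j ∈ Finset.range (J + 1), x ^ j ≤ 2 * N ^ α / (x - 1) := by
    rw [hgs1, div_le_div_iff₀ hxpos hxpos]
    have hxx : x ^ (J + 1) ≤ 2 * N ^ α := by
      rw [pow_succ]
      calc x ^ J * x ≤ N ^ α * 2 := mul_le_mul hxJ hx2 (by linarith) hNα
        _ = 2 * N ^ α := by ring
    nlinarith
  have hsN1 : (1:ℝ) ≤ Real.sqrt N := by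
    calc (1:ℝ) = Real.sqrt 1 := Real.sqrt_one.symm
      _ ≤ Real.sqrt N := Real.sqrt_le_sqrt hN1
  have hb2 : ∑ j ∈ Finset.range (J + 1), y ^ j ≤ 4 * Real.sqrt N := by
    rw [hgs2, div_le_iff₀ hypos]
    have h2 : y ^ 2 = 2 := Real.sq_sqrt (by norm_num)
    have hyy : y ^ (J + 1) ≤ y * Real.sqrt N := by
      rw [pow_succ]
      calc y ^ J * y ≤ Real.sqrt N * y :=
            mul_le_mul_of_nonneg_right hyJ (by linarith)
        _ = y * Real.sqrt N := by ring
    nlinarith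
  -- put everything together
  have t1 : 2 * (C * ∑ j ∈ Finset.range (J + 1), x ^ j) ≤ (4 / (x - 1)) * C * N ^ α := by
    have := mul_le_mul_of_nonneg_left hb1 (by linarith : (0:ℝ) ≤ 2 * C)
    calc 2 * (C * ∑ j ∈ Finset.range (J + 1), x ^ j)
        = 2 * C * ∑ j ∈ Finset.range (J + 1), x ^ j := by ring
      _ ≤ 2 * C * (2 * N ^ α / (x - 1)) := this
      _ = (4 / (x - 1)) * C * N ^ α := by ring
  have t2 : 2 * (5 * L * ∑ j ∈ Finset.range (J + 1), y ^ j) ≤ 40 * L * Real.sqrt N := by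
    have := mul_le_mul_of_nonneg_left hb2 (by linarith : (0:ℝ) ≤ 10 * L)
    calc 2 * (5 * L * ∑ j ∈ Finset.range (J + 1), y ^ j)
        = 10 * L * ∑ j ∈ Finset.range (J + 1), y ^ j := by ring
      _ ≤ 10 * L * (4 * Real.sqrt N) := this
      _ = 40 * L * Real.sqrt N := by ring
  linarith
end
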